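/- arXiv:2602.12903 — 5 statements merged into one kernel-verified Lean document; each statement's English description precedes it below -/
import Mathlib

section
/- Let d ≥ 1 be an integer, let K ⊆ ℝ^d be a nonempty compact convex set, let x ∈ ℝ^d with ‖x‖ ≤ 1, let α ∈ [0,1] and λ ∈ ℝ, and let H = {y ∈ ℝ^d : ⟪x,y⟫ ≤ λ} be a half-space whose boundary hyperplane is orthogonal to x. Assume λ ≥ inf_{v∈K} ⟪x,v⟫ + α·width(K,x) (i.e., the projection of H on direction x contains an α fraction of the projection of K). Then for every real z with 0 ≤ z ≤ α·width(K,x), vol((K \ H) + z𝔹) ≤ (1 − (α/(1+2α))^d) · vol(K + z𝔹). -/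
open MeasureTheory Set
open scoped RealInnerProductSpace Pointwise

noncomputable section

/-- Minkowski sum `K + z𝔹` of a set with `z` times the closed Euclidean unit ball. -/
def mink {d : ℕ} (K : Set (EuclideanSpace ℝ (Fin d))) (z : ℝ) :
    Set (EuclideanSpace ℝ (Fin d)) :=
  K + Metric.closedBall (0 : EuclideanSpace ℝ (Fin d)) z

/-- Width of a set `K` along direction `x`. -/
def width {d : ℕ} (K : Set (EuclideanSpace ℝ (Fin d))) (x : EuclideanSpace ℝ (Fin d)) : ℝ :=
  sSup ((fun v => ⟪v, x⟫) '' K) - sInf ((fun v => ⟪v, x⟫) '' K)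

theorem volume_diff_halfspace_add_ball_le
    (d : ℕ) (hd : 1 ≤ d)
    (K : Set (EuclideanSpace ℝ (Fin d))) (hKne : K.Nonempty) (hKcomp : IsCompact K)
    (hKconv : Convex ℝ K)
    (x : EuclideanSpace ℝ (Fin d)) (hx : ‖x‖ ≤ 1)
    (α : ℝ) (hα : α ∈ Icc (0:ℝ) 1) (lam : ℝ)
    (hlam : sInf ((fun v => ⟪v, x⟫) '' K) + α * width K x ≤ lam)
    (z : ℝ) (hz0 : 0 ≤ z) (hz : z ≤ α * width K x) :
    volume (mink (K \ {y | ⟪x, y⟫ ≤ lam}) z)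
      ≤ ENNReal.ofReal (1 - (α / (1 + 2 * α)) ^ d) * volume (mink K z) := by
  classical
  set f : EuclideanSpace ℝ (Fin d) → ℝ := fun v => ⟪v, x⟫ with hf
  have hfc : Continuous f := Continuous.inner continuous_id continuous_const
  set m := sInf (f '' K) with hm
  set M := sSup (f '' K) with hM
  have himg : IsCompact (f '' K) := hKcomp.image hfc
  have himgne : (f '' K).Nonempty := hKne.image f
  obtain ⟨p, hpK, hpm⟩ := himg.sInf_mem himgne
  have hle : ∀ v ∈ K, f v ≤ M := fun v hv => le_csSup himg.bddAbove ⟨v, hv, rfl⟩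
  have hge : ∀ v ∈ K, m ≤ f v := fun v hv => csInf_le himg.bddBelow ⟨v, hv, rfl⟩
  have hwidth : width K x = M - m := rfl
  have hw0 : 0 ≤ M - m := by have h1 := hle p hpK; linarith [hpm ▸ h1]
  have hlam' : m + α * (M - m) ≤ lam := by rw [hwidth] at hlam; exact hlam
  have hz' : z ≤ α * (M - m) := by rw [hwidth] at hz; exact hz
  have hBcomp : IsCompact (Metric.closedBall (0 : EuclideanSpace ℝ (Fin d)) z) :=
    isCompact_closedBall _ _
  set A := mink K z with hA
  have hAcomp : IsCompact A := hKcomp.add hBcomp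
  have hAconv : Convex ℝ A := hKconv.add (convex_closedBall _ _)
  set t := α / (1 + 2 * α) with htdef
  have h2α : (0:ℝ) < 1 + 2 * α := by linarith [hα.1]
  have ht0 : 0 ≤ t := div_nonneg hα.1 h2α.le
  have ht1 : t ≤ 1 := by rw [div_le_one h2α]; linarith [hα.1]
  have htmul : t * (1 + 2 * α) = α := div_mul_cancel₀ _ h2α.ne'
  set p' := p + (-(z / ‖x‖)) • x with hp'
  have hp'A : p' ∈ A := by
    refine Set.add_mem_add hpK ?_
    rw [Metric.mem_closedBall, dist_zero_right, norm_smul, Real.norm_eq_abs, abs_neg, abs_div,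
      abs_of_nonneg hz0, abs_of_nonneg (norm_nonneg x)]
    rcases eq_or_ne ‖x‖ 0 with h | h
    · simp [h, hz0]
    · rw [div_mul_cancel₀ _ h]
  have hxp : ⟪x, p⟫ = m := by rw [real_inner_comm]; exact hpm
  have hxp' : ⟪x, p'⟫ = m - z * ‖x‖ := by
    rw [hp', inner_add_right, inner_smul_right, real_inner_self_eq_norm_sq, hxp]
    rcases eq_or_ne ‖x‖ 0 with h | h
    · rw [h]; ring
    · field_simp; ring
  have hub : ∀ y ∈ A, ⟪x, y⟫ ≤ M + z * ‖x‖ := by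
    rintro y ⟨v, hv, b, hb, rfl⟩
    rw [inner_add_right]
    have h1 : ⟪x, v⟫ ≤ M := by rw [real_inner_comm]; exact hle v hv
    have h2 : ⟪x, b⟫ ≤ ‖x‖ * ‖b‖ := real_inner_le_norm x b
    have hbz : ‖b‖ ≤ z := by rwa [Metric.mem_closedBall, dist_zero_right] at hb
    nlinarith [norm_nonneg x, norm_nonneg b]
  set S := A ∩ {y | ⟪x, y⟫ ≤ lam - z * ‖x‖} with hSdef
  have hSmeas : MeasurableSet S :=
    hAcomp.measurableSet.inter
      ((isClosed_le (Continuous.inner continuous_const continuous_id) continuous_const).measurableSet)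
  have hzx : z * ‖x‖ ≤ α * (M - m) := by nlinarith [norm_nonneg x]
  have hTsub : AffineMap.homothety p' t '' A ⊆ S := by
    rintro _ ⟨y, hyA, rfl⟩
    have hTy : AffineMap.homothety p' t y = (1 - t) • p' + t • y := by
      simp [AffineMap.homothety_apply]
      module
    constructor
    · rw [hTy]; exact hAconv hp'A hyA (by linarith) ht0 (by ring)
    · show ⟪x, AffineMap.homothety p' t y⟫ ≤ lam - z * ‖x‖
      rw [hTy, inner_add_right, inner_smul_right, inner_smul_right, hxp']
      have hy := hub y hyA
      nlinarith [norm_nonneg x]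
  have hLsub : mink (K \ {y | ⟪x, y⟫ ≤ lam}) z ⊆ A \ S := by
    rintro _ ⟨a, ⟨haK, haH⟩, b, hb, rfl⟩
    have hbz : ‖b‖ ≤ z := by rwa [Metric.mem_closedBall, dist_zero_right] at hb
    refine ⟨Set.add_mem_add haK hb, ?_⟩
    rintro ⟨-, hle2⟩
    rw [Set.mem_setOf_eq] at hle2
    have haH' : lam < ⟪x, a⟫ := lt_of_not_ge haH
    rw [inner_add_right] at hle2
    have h2 := abs_real_inner_le_norm x b
    have h3 := neg_abs_le (⟪x, b⟫)
    nlinarith [norm_nonneg x]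
  have hfin : volume A ≠ ⊤ := hAcomp.measure_lt_top.ne
  have hSfin : volume S ≠ ⊤ := ne_top_of_le_ne_top hfin (measure_mono Set.inter_subset_left)
  have himage : volume (AffineMap.homothety p' t '' A) = ENNReal.ofReal (t ^ d) * volume A := by
    rw [Measure.addHaar_image_homothety, abs_pow, abs_of_nonneg ht0, finrank_euclideanSpace_fin]
  have hSlb : ENNReal.ofReal (t ^ d) * volume A ≤ volume S := by
    rw [← himage]; exact measure_mono hTsub
  have htd1 : t ^ d ≤ 1 := pow_le_one₀ ht0 ht1
  have htd0 : 0 ≤ t ^ d := pow_nonneg ht0 d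
  have hmulfin : ENNReal.ofReal (t ^ d) * volume A ≠ ⊤ := ENNReal.mul_ne_top ENNReal.ofReal_ne_top hfin
  calc volume (mink (K \ {y | ⟪x, y⟫ ≤ lam}) z) ≤ volume (A \ S) := measure_mono hLsub
    _ = volume A - volume S :=
        measure_diff Set.inter_subset_left hSmeas.nullMeasurableSet hSfin
    _ ≤ volume A - ENNReal.ofReal (t ^ d) * volume A := tsub_le_tsub_left hSlb _
    _ = ENNReal.ofReal (1 - t ^ d) * volume A := by
        have hsplit : volume A
            = ENNReal.ofReal (1 - t ^ d) * volume A + ENNReal.ofReal (t ^ d) * volume A := by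
          rw [← add_mul, ← ENNReal.ofReal_add (by linarith) htd0]
          norm_num
        nth_rewrite 1 [hsplit]
        rw [ENNReal.add_sub_cancel_right hmulfin]

end
end

section
/- Let d ≥ 1 be an integer, let S ⊆ ℝ^d be a nonempty compact convex set contained in 𝔹, let x ∈ ℝ^d with ‖x‖ = 1, and let i ∈ ℤ be such that 2^{-(i+1)} ≤ width(S,x) ≤ 2^{-i}. Set z = 2^{-i}/(8d) and let p ∈ ℝ satisfy vol({v ∈ S + z𝔹 : ⟪v,x⟫ ≤ p}) = (1/2)·vol(S + z𝔹). Then both half-space updates shrink the Steiner potential by a constant factor: vol({v ∈ S : ⟪v,x⟫ ≤ p} + z𝔹) ≤ (3/4)·vol(S + z𝔹) and vol({v ∈ S : ⟪v,x⟫ ≥ p} + z𝔹) ≤ (3/4)·vol(S + z𝔹). -/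
open MeasureTheory Set
open scoped RealInnerProductSpace Pointwise ENNReal

noncomputable section

variable {d : ℕ}

local notation "E" => EuclideanSpace ℝ (Fin d)

lemma exp_pow_aux (s t : ℝ) (d : ℕ) (hs : 0 ≤ s) (h : s * d ≤ t) :
    (1 + s) ^ d ≤ Real.exp t := by
  calc (1 + s) ^ d ≤ (Real.exp s) ^ d := by
        apply pow_le_pow_left₀ (by positivity)
        linarith [Real.add_one_le_exp s]
    _ = Real.exp (s * d) := by
        rw [← Real.exp_nat_mul]; ring_nf
    _ ≤ Real.exp t := Real.exp_le_exp.2 h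

lemma exp_two_lt : Real.exp 2 < 7.5 := by
  have h := Real.exp_one_lt_d9
  have : Real.exp 2 = (Real.exp 1) ^ 2 := by
    rw [← Real.exp_nat_mul]; norm_num
  rw [this]
  nlinarith [Real.exp_pos 1]

lemma N1 (d : ℕ) (hd : 1 ≤ d) : (1 + 2 / (5 * (d:ℝ))) ^ d ≤ 3 / 2 := by
  have hd0 : (0:ℝ) < d := by exact_mod_cast hd
  have h1 : (1 + 2 / (5 * (d:ℝ))) ^ d ≤ Real.exp (2/5) := by
    apply exp_pow_aux _ _ _ (by positivity)
    rw [div_mul_eq_mul_div, div_le_div_iff₀ (by positivity) (by norm_num)]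
    ring_nf
    nlinarith
  refine h1.trans ?_
  have h5 : Real.exp (2/5) ^ 5 ≤ (3/2:ℝ)^5 := by
    rw [← Real.exp_nat_mul]
    norm_num
    calc Real.exp 2 ≤ 7.5 := exp_two_lt.le
      _ ≤ 243/32 := by norm_num
  exact le_of_pow_le_pow_left₀ (by norm_num) (by norm_num) h5

lemma N2 (d : ℕ) (hd : 1 ≤ d) : (1 + 2 / (3 * (d:ℝ) + 2)) ^ d ≤ 2 := by
  have hd0 : (0:ℝ) < d := by exact_mod_cast hd
  have h1 : (1 + 2 / (3 * (d:ℝ) + 2)) ^ d ≤ Real.exp (2/3) := by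
    apply exp_pow_aux _ _ _ (by positivity)
    rw [div_mul_eq_mul_div, div_le_div_iff₀ (by positivity) (by norm_num)]
    ring_nf
    nlinarith
  refine h1.trans ?_
  have h5 : Real.exp (2/3) ^ 3 ≤ (2:ℝ)^3 := by
    rw [← Real.exp_nat_mul]
    norm_num
    calc Real.exp 2 ≤ 7.5 := exp_two_lt.le
      _ ≤ 8 := by norm_num
  exact le_of_pow_le_pow_left₀ (by norm_num) (by norm_num) h5

lemma hyperplane_null (x : E) (hx : x ≠ 0) (p : ℝ) :
    volume {v : E | ⟪v, x⟫ = p} = 0 := by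
  set W : Submodule ℝ E := LinearMap.ker (innerSL ℝ x : E →L[ℝ] ℝ).toLinearMap with hW
  have hxx : ⟪x, x⟫ ≠ 0 := fun h => hx (inner_self_eq_zero.mp h)
  have hmem : ∀ w : E, w ∈ W ↔ ⟪w, x⟫ = 0 := by
    intro w
    have h0 : w ∈ W ↔ ⟪x, w⟫ = 0 := Iff.rfl
    rw [h0, real_inner_comm]
  have hWne : W ≠ ⊤ := by
    intro h
    exact hxx ((hmem x).mp (h ▸ Submodule.mem_top))
  have hset : {v : E | ⟪v, x⟫ = p} = ((p / ⟪x, x⟫) • x) +ᵥ (W : Set E) := by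
    ext v
    simp only [mem_setOf_eq, Set.mem_vadd_set, vadd_eq_add]
    constructor
    · intro hv
      refine ⟨v - (p / ⟪x, x⟫) • x, ?_, by abel⟩
      rw [SetLike.mem_coe, hmem, inner_sub_left, real_inner_smul_left, hv,
        div_mul_cancel₀ p hxx, sub_self]
    · rintro ⟨w, hw, rfl⟩
      rw [SetLike.mem_coe, hmem] at hw
      rw [inner_add_left, real_inner_smul_left, hw, div_mul_cancel₀ p hxx, add_zero]
  rw [hset, measure_vadd]
  exact Measure.addHaar_submodule _ W hWne

lemma hom_lemma (K : Set E) (hK : Convex ℝ K)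
    (x : E) (a : ℝ) (c : E) (hc : c ∈ K) (hca : ⟪c, x⟫ = a)
    (δ δ' : ℝ) (h0 : 0 < δ) (hδ : δ ≤ δ') :
    volume {v ∈ K | ⟪v, x⟫ ≤ a + δ'} ≤
      ENNReal.ofReal ((δ' / δ) ^ d) * volume {v ∈ K | ⟪v, x⟫ ≤ a + δ} := by
  have h0' : 0 < δ' := lt_of_lt_of_le h0 hδ
  set r : ℝ := δ / δ' with hr
  have hr0 : 0 < r := by positivity
  have hr1 : r ≤ 1 := by rw [hr, div_le_one h0']; exact hδ
  set Φ : E → E := fun v => r • (v - c) + c with hΦ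
  have himg : Φ '' {v ∈ K | ⟪v, x⟫ ≤ a + δ'} ⊆ {v ∈ K | ⟪v, x⟫ ≤ a + δ} := by
    rintro _ ⟨v, ⟨hvK, hvx⟩, rfl⟩
    constructor
    · have hconv : Φ v = r • v + (1 - r) • c := by
        simp only [hΦ, smul_sub, sub_smul, one_smul]; abel
      rw [hconv]
      exact hK hvK hc hr0.le (by linarith) (by ring)
    · have hval : ⟪Φ v, x⟫ = r * ⟪v, x⟫ + (1 - r) * a := by
        simp only [hΦ, inner_add_left, real_inner_smul_left, inner_sub_left, hca]
        ring
      rw [hval]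
      have h1 : r * ⟪v, x⟫ ≤ r * (a + δ') := mul_le_mul_of_nonneg_left hvx hr0.le
      have hrd : r * δ' = δ := by rw [hr]; exact div_mul_cancel₀ δ h0'.ne'
      nlinarith
  have hmeas := measure_mono (μ := volume) himg
  have hhom : Φ = fun v => AffineMap.homothety c r v := by
    funext v
    simp only [hΦ, AffineMap.homothety_apply, vsub_eq_sub, vadd_eq_add]
  rw [hhom] at hmeas
  rw [show (fun v => AffineMap.homothety c r v) '' {v ∈ K | ⟪v, x⟫ ≤ a + δ'}
      = AffineMap.homothety c r '' {v ∈ K | ⟪v, x⟫ ≤ a + δ'} from rfl,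
    Measure.addHaar_image_homothety] at hmeas
  rw [show Module.finrank ℝ E = d from finrank_euclideanSpace_fin] at hmeas
  rw [abs_of_nonneg (by positivity : (0:ℝ) ≤ r ^ d)] at hmeas
  calc volume {v ∈ K | ⟪v, x⟫ ≤ a + δ'}
      = ENNReal.ofReal ((δ'/δ)^d) * (ENNReal.ofReal (r ^ d) * volume {v ∈ K | ⟪v, x⟫ ≤ a + δ'}) := by
        rw [← mul_assoc, ← ENNReal.ofReal_mul (by positivity), ← mul_pow]
        have hone : δ' / δ * r = 1 := by
          rw [hr, div_mul_div_comm, mul_comm δ' δ, div_self (mul_pos h0 h0').ne']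
        rw [hone, one_pow, ENNReal.ofReal_one, one_mul]
    _ ≤ ENNReal.ofReal ((δ'/δ)^d) * volume {v ∈ K | ⟪v, x⟫ ≤ a + δ} :=
        mul_le_mul_right hmeas _

lemma inv22 : (2:ℝ≥0∞)⁻¹ * 2⁻¹ = 4⁻¹ := by
  rw [← ENNReal.mul_inv (Or.inl (by norm_num)) (Or.inl (by norm_num))]
  norm_num
lemma ee1 : (3/2 : ℝ≥0∞) * (1/2) = 3/4 := by
  rw [div_eq_mul_inv, div_eq_mul_inv, one_mul, mul_assoc, inv22, ← div_eq_mul_inv]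
lemma ee2 : (1/2 : ℝ≥0∞) * (1/2) = 1/4 := by
  rw [div_eq_mul_inv, div_eq_mul_inv, one_mul, one_mul, inv22, ← one_mul (4:ℝ≥0∞)⁻¹,
    ← div_eq_mul_inv]
lemma ee3 (V : ℝ≥0∞) : (1/2 : ℝ≥0∞) * (2 * V) = V := by
  rw [← mul_assoc, ENNReal.div_mul_cancel] <;> norm_num
lemma ee4 : (3/4 : ℝ≥0∞) + 1/4 = 1 := by
  rw [ENNReal.div_add_div_same]
  norm_num
  exact ENNReal.div_self (by norm_num) (by norm_num)

lemma aux_lemma (hd : 1 ≤ d) (K : Set E) (hK : Convex ℝ K) (hKc : IsCompact K)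
    (x : E) (hx0 : x ≠ 0) (a b : ℝ)
    (hca : ∃ c ∈ K, ⟪c, x⟫ = a) (hcb : ∃ c ∈ K, ⟪c, x⟫ = b)
    (hbounds : ∀ v ∈ K, a ≤ ⟪v, x⟫ ∧ ⟪v, x⟫ ≤ b)
    (z : ℝ) (hz : 0 < z) (hba : (4 * (d:ℝ) + 2) * z ≤ b - a)
    (p : ℝ)
    (hmed : volume {v ∈ K | ⟪v, x⟫ ≤ p} = (1/2 : ℝ≥0∞) * volume K)
    (hmed' : volume {v ∈ K | p ≤ ⟪v, x⟫} = (1/2 : ℝ≥0∞) * volume K) :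
    volume {v ∈ K | ⟪v, x⟫ ≤ p + z} ≤ (3/4 : ℝ≥0∞) * volume K := by
  have hd0 : (1:ℝ) ≤ (d:ℝ) := by exact_mod_cast hd
  have hVfin : volume K ≠ ⊤ := hKc.measure_lt_top.ne
  by_cases hV0 : volume K = 0
  · calc volume {v ∈ K | ⟪v, x⟫ ≤ p + z} ≤ volume K := measure_mono (sep_subset _ _)
      _ = 0 := hV0
      _ ≤ _ := zero_le
  have hKm : MeasurableSet K := hKc.isClosed.measurableSet
  have hf : Continuous fun v : E => ⟪v, x⟫ := Continuous.inner continuous_id continuous_const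
  have hpa : a < p := by
    by_contra h
    push_neg at h
    have hsub : {v ∈ K | ⟪v, x⟫ ≤ p} ⊆ {v : E | ⟪v, x⟫ = a} := by
      rintro v ⟨hvK, hvp⟩
      exact le_antisymm (hvp.trans h) (hbounds v hvK).1
    have h0 : volume {v ∈ K | ⟪v, x⟫ ≤ p} = 0 :=
      measure_mono_null hsub (hyperplane_null x hx0 a)
    rw [hmed] at h0
    rcases mul_eq_zero.mp h0 with h' | h'
    · norm_num at h'
    · exact hV0 h'
  have hpb : p < b := by
    by_contra h
    push_neg at h
    have hsub : {v ∈ K | p ≤ ⟪v, x⟫} ⊆ {v : E | ⟪v, x⟫ = b} := by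
      rintro v ⟨hvK, hvp⟩
      exact le_antisymm (hbounds v hvK).2 (h.trans hvp)
    have h0 : volume {v ∈ K | p ≤ ⟪v, x⟫} = 0 :=
      measure_mono_null hsub (hyperplane_null x hx0 b)
    rw [hmed'] at h0
    rcases mul_eq_zero.mp h0 with h' | h'
    · norm_num at h'
    · exact hV0 h'
  have h32 : ENNReal.ofReal (3/2 : ℝ) = 3/2 := by
    rw [ENNReal.ofReal_div_of_pos (by norm_num), ENNReal.ofReal_ofNat, ENNReal.ofReal_ofNat]
  by_cases hcase : 5 * (d:ℝ) * z / 2 ≤ p - a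
  -- Case 1: p is far from the bottom; dilate from the bottom point.
  · obtain ⟨c, hcK, hcx⟩ := hca
    have h0 : (0:ℝ) < p - a := lt_of_lt_of_le (by nlinarith) hcase
    have hhom := hom_lemma K hK x a c hcK hcx (p - a) (p - a + z) h0 (by linarith)
    rw [show a + (p - a + z) = p + z by ring, show a + (p - a) = p by ring, hmed] at hhom
    have hratio : ((p - a + z) / (p - a)) ^ d ≤ 3 / 2 := by
      refine le_trans (pow_le_pow_left₀ (by positivity) ?_ d) (N1 d hd)
      rw [div_le_iff₀ h0]
      have key : 2 / (5 * (d:ℝ)) * (5 * (d:ℝ) * z / 2) = z := by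
        field_simp
      have h2 : z ≤ 2 / (5 * (d:ℝ)) * (p - a) := by
        rw [← key]
        exact mul_le_mul_of_nonneg_left hcase (by positivity)
      nlinarith
    calc volume {v ∈ K | ⟪v, x⟫ ≤ p + z}
        ≤ ENNReal.ofReal (((p - a + z) / (p - a)) ^ d) * ((1/2 : ℝ≥0∞) * volume K) := hhom
      _ ≤ ENNReal.ofReal (3/2 : ℝ) * ((1/2 : ℝ≥0∞) * volume K) :=
          mul_le_mul_left (ENNReal.ofReal_le_ofReal hratio) _
      _ = (3/4 : ℝ≥0∞) * volume K := by
          rw [h32, ← mul_assoc, ee1]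
  -- Case 2: p is far from the top; dilate the upper part from the top point.
  · push_neg at hcase
    obtain ⟨c, hcK, hcx⟩ := hcb
    have hM : (3 * (d:ℝ) + 4) * z / 2 ≤ b - p := by linarith
    have h0 : (0:ℝ) < b - p - z := by nlinarith
    have hhom := hom_lemma K hK (-x) (-b) c hcK (by rw [inner_neg_right, hcx]) (b - p - z)
      (b - p) h0 (by linarith)
    have e1 : {v ∈ K | ⟪v, -x⟫ ≤ -b + (b - p)} = {v ∈ K | p ≤ ⟪v, x⟫} := by
      ext v
      simp only [mem_setOf_eq, inner_neg_right]
      constructor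
      · rintro ⟨h1, h2⟩; exact ⟨h1, by linarith⟩
      · rintro ⟨h1, h2⟩; exact ⟨h1, by linarith⟩
    have e2 : {v ∈ K | ⟪v, -x⟫ ≤ -b + (b - p - z)} = {v ∈ K | p + z ≤ ⟪v, x⟫} := by
      ext v
      simp only [mem_setOf_eq, inner_neg_right]
      constructor
      · rintro ⟨h1, h2⟩; exact ⟨h1, by linarith⟩
      · rintro ⟨h1, h2⟩; exact ⟨h1, by linarith⟩
    rw [e1, e2, hmed'] at hhom
    have hratio : ((b - p) / (b - p - z)) ^ d ≤ 2 := by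
      refine le_trans (pow_le_pow_left₀ (div_nonneg (by linarith) h0.le) ?_ d) (N2 d hd)
      rw [div_le_iff₀ h0]
      have key : 2 / (3 * (d:ℝ) + 2) * ((3 * (d:ℝ) + 2) * z / 2) = z := by
        field_simp
      have h2 : z ≤ 2 / (3 * (d:ℝ) + 2) * (b - p - z) := by
        rw [← key]
        exact mul_le_mul_of_nonneg_left (by linarith) (by positivity)
      nlinarith
    have h2' : ENNReal.ofReal (((b - p) / (b - p - z)) ^ d) ≤ 2 := by
      calc ENNReal.ofReal (((b - p) / (b - p - z)) ^ d) ≤ ENNReal.ofReal 2 :=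
            ENNReal.ofReal_le_ofReal hratio
        _ = 2 := ENNReal.ofReal_ofNat 2
    have hB : (1/4 : ℝ≥0∞) * volume K ≤ volume {v ∈ K | p + z ≤ ⟪v, x⟫} := by
      have step : (1/2 : ℝ≥0∞) * volume K ≤ 2 * volume {v ∈ K | p + z ≤ ⟪v, x⟫} :=
        hhom.trans (mul_le_mul_left h2' _)
      have := mul_le_mul_right step (1/2 : ℝ≥0∞)
      calc (1/4 : ℝ≥0∞) * volume K = (1/2) * ((1/2 : ℝ≥0∞) * volume K) := by
            rw [← mul_assoc, ee2]
        _ ≤ (1/2) * (2 * volume {v ∈ K | p + z ≤ ⟪v, x⟫}) := this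
        _ = volume {v ∈ K | p + z ≤ ⟪v, x⟫} := ee3 _
    -- strict-version upper part
    have hB' : (1/4 : ℝ≥0∞) * volume K ≤ volume {v ∈ K | p + z < ⟪v, x⟫} := by
      refine hB.trans ?_
      have hsub : {v ∈ K | p + z ≤ ⟪v, x⟫} ⊆
          {v ∈ K | p + z < ⟪v, x⟫} ∪ {v : E | ⟪v, x⟫ = p + z} := by
        rintro v ⟨hvK, hvp⟩
        rcases lt_or_eq_of_le hvp with h' | h'
        · exact Or.inl ⟨hvK, h'⟩
        · exact Or.inr h'.symm
      calc volume {v ∈ K | p + z ≤ ⟪v, x⟫}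
          ≤ volume ({v ∈ K | p + z < ⟪v, x⟫} ∪ {v : E | ⟪v, x⟫ = p + z}) := measure_mono hsub
        _ ≤ volume {v ∈ K | p + z < ⟪v, x⟫} + volume {v : E | ⟪v, x⟫ = p + z} :=
            measure_union_le _ _
        _ = volume {v ∈ K | p + z < ⟪v, x⟫} := by
            rw [hyperplane_null x hx0 (p + z), add_zero]
    have hsplit : volume {v ∈ K | ⟪v, x⟫ ≤ p + z} + volume {v ∈ K | p + z < ⟪v, x⟫}
        = volume K := by
      rw [← measure_union ?hd ?hm]
      · congr 1
        ext v
        constructor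
        · rintro (⟨h1, _⟩ | ⟨h1, _⟩) <;> exact h1
        · intro hvK
          rcases le_or_gt (⟪v, x⟫) (p + z) with h' | h'
          · exact Or.inl ⟨hvK, h'⟩
          · exact Or.inr ⟨hvK, h'⟩
      case hd =>
        rw [Set.disjoint_left]
        rintro v ⟨_, h1⟩ ⟨_, h2⟩
        exact absurd h2 (not_lt.mpr h1)
      case hm =>
        exact hKm.inter (measurableSet_lt measurable_const hf.measurable)
    have hfin4 : (1/4 : ℝ≥0∞) * volume K ≠ ⊤ := by
      exact ENNReal.mul_ne_top (by norm_num) hVfin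
    rw [← ENNReal.add_le_add_iff_right hfin4]
    calc volume {v ∈ K | ⟪v, x⟫ ≤ p + z} + (1/4 : ℝ≥0∞) * volume K
        ≤ volume {v ∈ K | ⟪v, x⟫ ≤ p + z} + volume {v ∈ K | p + z < ⟪v, x⟫} :=
          add_le_add_right hB' _
      _ = volume K := hsplit
      _ = (3/4 : ℝ≥0∞) * volume K + (1/4 : ℝ≥0∞) * volume K := by
          rw [← add_mul, ee4, one_mul]

/-- Balanced prices shrink the Steiner potential by a factor `3/4`, regardless of the
feedback. -/
theorem balanced_price_potential_decrease
    (d : ℕ) (hd : 1 ≤ d)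
    (S : Set (EuclideanSpace ℝ (Fin d))) (hSne : S.Nonempty) (hScomp : IsCompact S)
    (hSconv : Convex ℝ S)
    (hSball : S ⊆ Metric.closedBall (0 : EuclideanSpace ℝ (Fin d)) 1)
    (x : EuclideanSpace ℝ (Fin d)) (hx : ‖x‖ = 1)
    (i : ℤ) (hwl : (2:ℝ) ^ (-(i + 1)) ≤ width S x) (hwu : width S x ≤ (2:ℝ) ^ (-i))
    (z : ℝ) (hzdef : z = (2:ℝ) ^ (-i) / (8 * d))
    (p : ℝ)
    (hp : volume {v ∈ mink S z | ⟪v, x⟫ ≤ p} = (1/2 : ℝ≥0∞) * volume (mink S z)) :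
    volume (mink {v ∈ S | ⟪v, x⟫ ≤ p} z) ≤ (3/4 : ℝ≥0∞) * volume (mink S z) ∧
    volume (mink {v ∈ S | p ≤ ⟪v, x⟫} z) ≤ (3/4 : ℝ≥0∞) * volume (mink S z) := by
  have hd0 : (1:ℝ) ≤ (d:ℝ) := by exact_mod_cast hd
  have hx0 : x ≠ 0 := by
    intro h; rw [h, norm_zero] at hx; norm_num at hx
  have hpow : (0:ℝ) < (2:ℝ) ^ (-i) := zpow_pos (by norm_num) _
  have hz : 0 < z := by
    rw [hzdef]; positivity
  have hKconv : Convex ℝ (mink S z) := hSconv.add (convex_closedBall _ _)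
  have hKcomp : IsCompact (mink S z) := hScomp.add (isCompact_closedBall _ _)
  have hf : Continuous fun v : EuclideanSpace ℝ (Fin d) => ⟪v, x⟫ := Continuous.inner continuous_id continuous_const
  -- max and min of inner products on S
  obtain ⟨vb, hvbS, hvb⟩ := hScomp.exists_isMaxOn hSne hf.continuousOn
  obtain ⟨va, hvaS, hva⟩ := hScomp.exists_isMinOn hSne hf.continuousOn
  set A : ℝ := ⟪va, x⟫ with hA
  set B : ℝ := ⟪vb, x⟫ with hB
  have hvb' : ∀ v ∈ S, ⟪v, x⟫ ≤ B := fun v hv => hvb hv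
  have hva' : ∀ v ∈ S, A ≤ ⟪v, x⟫ := fun v hv => hva hv
  have hwidth : width S x = B - A := by
    rw [width]
    congr 1
    · apply IsGreatest.csSup_eq
      exact ⟨mem_image_of_mem _ hvbS, by
        rw [mem_upperBounds]
        rintro y ⟨v, hv, rfl⟩
        exact hvb' v hv⟩
    · apply IsLeast.csInf_eq
      exact ⟨mem_image_of_mem _ hvaS, by
        rw [mem_lowerBounds]
        rintro y ⟨v, hv, rfl⟩
        exact hva' v hv⟩
  have hxx : ⟪x, x⟫ = 1 := by
    rw [real_inner_self_eq_norm_mul_norm, hx]; norm_num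
  have hzx : (z • x) ∈ Metric.closedBall (0:EuclideanSpace ℝ (Fin d)) z := by
    rw [mem_closedBall_zero_iff, norm_smul, hx, Real.norm_eq_abs, abs_of_pos hz, mul_one]
  have hzx' : ((-z) • x) ∈ Metric.closedBall (0:EuclideanSpace ℝ (Fin d)) z := by
    rw [mem_closedBall_zero_iff, norm_smul, hx, Real.norm_eq_abs, abs_neg, abs_of_pos hz,
      mul_one]
  -- membership bounds in (mink S z)
  have hbounds : ∀ v ∈ (mink S z), A - z ≤ ⟪v, x⟫ ∧ ⟪v, x⟫ ≤ B + z := by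
    rintro v hv
    rw [mink] at hv
    rcases Set.mem_add.mp hv with ⟨s, hs, w, hw, rfl⟩
    rw [mem_closedBall_zero_iff] at hw
    have habs : |⟪w, x⟫| ≤ z := by
      calc |⟪w, x⟫| ≤ ‖w‖ * ‖x‖ := abs_real_inner_le_norm _ _
        _ = ‖w‖ := by rw [hx, mul_one]
        _ ≤ z := hw
    rw [inner_add_left]
    rw [abs_le] at habs
    exact ⟨by linarith [hva' s hs], by linarith [hvb' s hs]⟩
  have hca : ∃ c ∈ (mink S z), ⟪c, x⟫ = A - z := by
    refine ⟨va + (-z) • x, ?_, ?_⟩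
    · rw [mink]; exact Set.add_mem_add hvaS hzx'
    · rw [inner_add_left, real_inner_smul_left, hxx]; ring
  have hcb : ∃ c ∈ (mink S z), ⟪c, x⟫ = B + z := by
    refine ⟨vb + z • x, ?_, ?_⟩
    · rw [mink]; exact Set.add_mem_add hvbS hzx
    · rw [inner_add_left, real_inner_smul_left, hxx]; ring
  -- width bound
  have h4dz : 4 * (d:ℝ) * z = (2:ℝ) ^ (-(i+1)) := by
    have hd0' : (d:ℝ) ≠ 0 := by positivity
    rw [hzdef, show (-(i+1)) = -i + (-1) by ring, zpow_add₀ (by norm_num : (2:ℝ) ≠ 0)]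
    field_simp
    ring
  have hba : (4 * (d:ℝ) + 2) * z ≤ (B + z) - (A - z) := by
    have : (2:ℝ) ^ (-(i+1)) ≤ B - A := hwidth ▸ hwl
    nlinarith
  -- median for the other side
  have hKm : MeasurableSet (mink S z) := hKcomp.isClosed.measurableSet
  have hVfin : volume (mink S z) ≠ ⊤ := hKcomp.measure_lt_top.ne
  have hsplit : volume {v ∈ (mink S z) | ⟪v, x⟫ ≤ p} + volume {v ∈ (mink S z) | p < ⟪v, x⟫} = volume (mink S z) := by
    rw [← measure_union ?hd ?hm]
    · congr 1
      ext v
      constructor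
      · rintro (⟨h1, _⟩ | ⟨h1, _⟩) <;> exact h1
      · intro hvK
        rcases le_or_gt (⟪v, x⟫) p with h' | h'
        · exact Or.inl ⟨hvK, h'⟩
        · exact Or.inr ⟨hvK, h'⟩
    case hd =>
      rw [Set.disjoint_left]
      rintro v ⟨_, h1⟩ ⟨_, h2⟩
      exact absurd h2 (not_lt.mpr h1)
    case hm =>
      exact hKm.inter (measurableSet_lt measurable_const hf.measurable)
  have hmed' : volume {v ∈ (mink S z) | p ≤ ⟪v, x⟫} = (1/2 : ℝ≥0∞) * volume (mink S z) := by
    have ehalf : (1/2 : ℝ≥0∞) + 1/2 = 1 := by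
      rw [ENNReal.div_add_div_same]
      norm_num
      exact ENNReal.div_self (by norm_num) (by norm_num)
    have hhalf : volume {v ∈ (mink S z) | p < ⟪v, x⟫} = (1/2 : ℝ≥0∞) * volume (mink S z) := by
      have h2 : (1/2 : ℝ≥0∞) * volume (mink S z) + volume {v ∈ (mink S z) | p < ⟪v, x⟫}
          = (1/2 : ℝ≥0∞) * volume (mink S z) + (1/2 : ℝ≥0∞) * volume (mink S z) := by
        calc (1/2 : ℝ≥0∞) * volume (mink S z) + volume {v ∈ (mink S z) | p < ⟪v, x⟫}
            = volume {v ∈ (mink S z) | ⟪v, x⟫ ≤ p} + volume {v ∈ (mink S z) | p < ⟪v, x⟫} := by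
              rw [hp]
          _ = volume (mink S z) := hsplit
          _ = (1/2 : ℝ≥0∞) * volume (mink S z) + (1/2 : ℝ≥0∞) * volume (mink S z) := by
              rw [← add_mul, ehalf, one_mul]
      exact (ENNReal.add_right_inj (ENNReal.mul_ne_top (by norm_num) hVfin)).mp h2
    apply le_antisymm
    · have hsub : {v ∈ (mink S z) | p ≤ ⟪v, x⟫} ⊆
          {v ∈ (mink S z) | p < ⟪v, x⟫} ∪ {v : EuclideanSpace ℝ (Fin d) | ⟪v, x⟫ = p} := by
        rintro v ⟨hvK, hvp⟩
        rcases lt_or_eq_of_le hvp with h' | h'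
        · exact Or.inl ⟨hvK, h'⟩
        · exact Or.inr h'.symm
      calc volume {v ∈ (mink S z) | p ≤ ⟪v, x⟫}
          ≤ volume ({v ∈ (mink S z) | p < ⟪v, x⟫} ∪ {v : EuclideanSpace ℝ (Fin d) | ⟪v, x⟫ = p}) := measure_mono hsub
        _ ≤ volume {v ∈ (mink S z) | p < ⟪v, x⟫} + volume {v : EuclideanSpace ℝ (Fin d) | ⟪v, x⟫ = p} := measure_union_le _ _
        _ = (1/2 : ℝ≥0∞) * volume (mink S z) := by rw [hyperplane_null x hx0 p, add_zero, hhalf]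
    · rw [← hhalf]
      apply measure_mono
      rintro v ⟨hvK, hvp⟩
      exact ⟨hvK, hvp.le⟩
  -- first conclusion
  constructor
  · have haux := aux_lemma hd (mink S z) hKconv hKcomp x hx0 (A - z) (B + z) hca hcb hbounds z hz hba
      p hp hmed'
    refine le_trans (measure_mono ?_) haux
    rintro u hu
    rw [mink] at hu
    rcases Set.mem_add.mp hu with ⟨s, ⟨hsS, hsp⟩, w, hw, rfl⟩
    rw [mem_closedBall_zero_iff] at hw
    have habs : |⟪w, x⟫| ≤ z := by
      calc |⟪w, x⟫| ≤ ‖w‖ * ‖x‖ := abs_real_inner_le_norm _ _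
        _ = ‖w‖ := by rw [hx, mul_one]
        _ ≤ z := hw
    rw [abs_le] at habs
    constructor
    · rw [mink]; exact Set.add_mem_add hsS (by rw [mem_closedBall_zero_iff]; exact hw)
    · rw [inner_add_left]; linarith
  · -- second conclusion via -x
    have hmx0 : (-x) ≠ 0 := neg_ne_zero.mpr hx0
    have hca2 : ∃ c ∈ (mink S z), ⟪c, -x⟫ = -(B + z) := by
      obtain ⟨c, hcK, hc⟩ := hcb
      exact ⟨c, hcK, by rw [inner_neg_right, hc]⟩
    have hcb2 : ∃ c ∈ (mink S z), ⟪c, -x⟫ = -(A - z) := by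
      obtain ⟨c, hcK, hc⟩ := hca
      exact ⟨c, hcK, by rw [inner_neg_right, hc]⟩
    have hbounds2 : ∀ v ∈ (mink S z), -(B + z) ≤ ⟪v, -x⟫ ∧ ⟪v, -x⟫ ≤ -(A - z) := by
      intro v hv
      obtain ⟨h1, h2⟩ := hbounds v hv
      rw [inner_neg_right]
      exact ⟨by linarith, by linarith⟩
    have hba2 : (4 * (d:ℝ) + 2) * z ≤ -(A - z) - -(B + z) := by linarith
    have hmed2 : volume {v ∈ (mink S z) | ⟪v, -x⟫ ≤ -p} = (1/2 : ℝ≥0∞) * volume (mink S z) := by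
      rw [show {v ∈ (mink S z) | ⟪v, -x⟫ ≤ -p} = {v ∈ (mink S z) | p ≤ ⟪v, x⟫} by
        ext v; simp only [mem_setOf_eq, inner_neg_right]
        exact ⟨fun ⟨h1, h2⟩ => ⟨h1, by linarith⟩, fun ⟨h1, h2⟩ => ⟨h1, by linarith⟩⟩]
      exact hmed'
    have hmed2' : volume {v ∈ (mink S z) | -p ≤ ⟪v, -x⟫} = (1/2 : ℝ≥0∞) * volume (mink S z) := by
      rw [show {v ∈ (mink S z) | -p ≤ ⟪v, -x⟫} = {v ∈ (mink S z) | ⟪v, x⟫ ≤ p} by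
        ext v; simp only [mem_setOf_eq, inner_neg_right]
        exact ⟨fun ⟨h1, h2⟩ => ⟨h1, by linarith⟩, fun ⟨h1, h2⟩ => ⟨h1, by linarith⟩⟩]
      exact hp
    have haux := aux_lemma hd (mink S z) hKconv hKcomp (-x) hmx0 (-(B + z)) (-(A - z)) hca2 hcb2
      hbounds2 z hz hba2 (-p) hmed2 hmed2'
    have hset : {v ∈ (mink S z) | ⟪v, -x⟫ ≤ -p + z} = {v ∈ (mink S z) | p - z ≤ ⟪v, x⟫} := by
      ext v; simp only [mem_setOf_eq, inner_neg_right]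
      exact ⟨fun ⟨h1, h2⟩ => ⟨h1, by linarith⟩, fun ⟨h1, h2⟩ => ⟨h1, by linarith⟩⟩
    rw [hset] at haux
    refine le_trans (measure_mono ?_) haux
    rintro u hu
    rw [mink] at hu
    rcases Set.mem_add.mp hu with ⟨s, ⟨hsS, hsp⟩, w, hw, rfl⟩
    rw [mem_closedBall_zero_iff] at hw
    have habs : |⟪w, x⟫| ≤ z := by
      calc |⟪w, x⟫| ≤ ‖w‖ * ‖x‖ := abs_real_inner_le_norm _ _
        _ = ‖w‖ := by rw [hx, mul_one]
        _ ≤ z := hw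
    rw [abs_le] at habs
    constructor
    · rw [mink]; exact Set.add_mem_add hsS (by rw [mem_closedBall_zero_iff]; exact hw)
    · rw [inner_add_left]; linarith

end
end

section
/- Let d ≥ 1 be an integer, let S, B ⊆ ℝ^d be nonempty compact convex sets, and let x ∈ ℝ^d with ‖x‖ ≤ 1. Write s̲ = inf_{v∈S} ⟪v,x⟫, s̄ = sup_{v∈S} ⟪v,x⟫, b̲ = inf_{v∈B} ⟪v,x⟫, b̄ = sup_{v∈B} ⟪v,x⟫. Assume the 'strong overlap' conditions: b̲ < s̄; it is NOT the case that (width(S,x) ≥ width(B,x) and (s̲+s̄)/2 ≤ b̲); and it is NOT the case that (width(B,x) ≥ width(S,x) and (b̲+b̄)/2 ≥ s̄). Let p ∈ ℝ with s̲ ≤ p ≤ b̄ (a price that results in a trade). Then at least one of the following holds: (i) for every z with 0 ≤ z ≤ width(S,x)/4, vol({v ∈ S : ⟪v,x⟫ ≤ p} + z𝔹) ≤ (1 − 6^{-d})·vol(S + z𝔹); or (ii) for every z with 0 ≤ z ≤ width(B,x)/4, vol({v ∈ B : ⟪v,x⟫ ≥ p} + z𝔹) ≤ (1 − 6^{-d})·vol(B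 + z𝔹). -/
open MeasureTheory Set
open scoped RealInnerProductSpace Pointwise ENNReal

set_option maxHeartbeats 1000000

noncomputable section

/-- A hyperplane has Lebesgue measure zero. -/
lemma hyperplane_null_s3 (d : ℕ) (x : EuclideanSpace ℝ (Fin d)) (hx : x ≠ 0) (c : ℝ) :
    volume {v : EuclideanSpace ℝ (Fin d) | ⟪v, x⟫ = c} = 0 := by
  have hxn : (0:ℝ) < ‖x‖ := norm_pos_iff.2 hx
  set a : EuclideanSpace ℝ (Fin d) := (c / ‖x‖ ^ 2) • x with ha_def
  have ha : ⟪a, x⟫ = c := by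
    rw [ha_def, real_inner_smul_left, real_inner_self_eq_norm_sq]
    field_simp
  have hker : LinearMap.ker ((innerSL ℝ x).toLinearMap) ≠ ⊤ := by
    intro h
    have hx2 : x ∈ LinearMap.ker ((innerSL ℝ x).toLinearMap) := h ▸ Submodule.mem_top
    rw [LinearMap.mem_ker] at hx2
    simp only [ContinuousLinearMap.coe_coe, innerSL_apply_apply] at hx2
    exact hx (inner_self_eq_zero.1 hx2)
  have hset : {v : EuclideanSpace ℝ (Fin d) | ⟪v, x⟫ = c}
      = a +ᵥ ((LinearMap.ker ((innerSL ℝ x).toLinearMap) : Submodule ℝ _) : Set _) := by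
    ext v
    constructor
    · intro hv
      refine ⟨v - a, ?_, by simp⟩
      simp only [SetLike.mem_coe, LinearMap.mem_ker, ContinuousLinearMap.coe_coe, innerSL_apply_apply]
      rw [inner_sub_right]
      rw [real_inner_comm v x, real_inner_comm a x]
      have hv' : ⟪v, x⟫ = c := hv
      rw [hv', ha]; ring
    · rintro ⟨u, hu, rfl⟩
      simp only [SetLike.mem_coe, LinearMap.mem_ker, ContinuousLinearMap.coe_coe,
        innerSL_apply_apply] at hu
      show ⟪a + u, x⟫ = c
      rw [inner_add_left, ha, real_inner_comm u x] at *
      rw [hu]; ring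
  rw [hset, measure_vadd]
  exact Measure.addHaar_submodule volume _ hker

/-- Core cut lemma: cutting below `lo + (3/4) width` removes a `6^(-d)` fraction. -/
lemma core_cut (d : ℕ) (K : Set (EuclideanSpace ℝ (Fin d)))
    (hKne : K.Nonempty) (hKcomp : IsCompact K) (hKconv : Convex ℝ K)
    (x : EuclideanSpace ℝ (Fin d)) (hx : ‖x‖ ≤ 1) (hx0 : x ≠ 0) (p : ℝ)
    (hp : p ≤ sInf ((fun v => ⟪v, x⟫) '' K)
        + (3/4) * (sSup ((fun v => ⟪v, x⟫) '' K) - sInf ((fun v => ⟪v, x⟫) '' K)))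
    (z : ℝ) (hz0 : 0 ≤ z)
    (hzw : z ≤ (sSup ((fun v => ⟪v, x⟫) '' K) - sInf ((fun v => ⟪v, x⟫) '' K)) / 4) :
    volume (mink {v ∈ K | ⟪v, x⟫ ≤ p} z)
      ≤ ENNReal.ofReal (1 - (6:ℝ) ^ (-(d:ℤ))) * volume (mink K z) := by
  classical
  set f : EuclideanSpace ℝ (Fin d) → ℝ := fun v => ⟪v, x⟫ with hf_def
  have hfc : Continuous f := continuous_id.inner continuous_const
  set lo := sInf (f '' K) with hlo_def
  set hi := sSup (f '' K) with hhi_def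
  have hxn : (0:ℝ) < ‖x‖ := norm_pos_iff.2 hx0
  obtain ⟨v0, hv0K, hv0max⟩ := hKcomp.exists_isMaxOn hKne hfc.continuousOn
  have hgreat : IsGreatest (f '' K) (f v0) :=
    ⟨mem_image_of_mem f hv0K, by rintro y ⟨v, hv, rfl⟩; exact hv0max hv⟩
  have hhi : hi = f v0 := hgreat.csSup_eq
  have hbdd : BddBelow (f '' K) := (hKcomp.image hfc).bddBelow
  have hlo_le : ∀ v ∈ K, lo ≤ f v := fun v hv => csInf_le hbdd (mem_image_of_mem f hv)
  have hle_hi : ∀ v ∈ K, f v ≤ hi := fun v hv => hhi ▸ hv0max hv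
  have hlohi : lo ≤ hi := le_trans (hlo_le v0 hv0K) (hle_hi v0 hv0K)
  set bl := Metric.closedBall (0 : EuclideanSpace ℝ (Fin d)) z with hbl_def
  -- the shifted top point
  set v1 : EuclideanSpace ℝ (Fin d) := v0 + z • (‖x‖⁻¹ • x) with hv1_def
  have hv1mem : v1 ∈ K + bl := by
    refine ⟨v0, hv0K, z • (‖x‖⁻¹ • x), ?_, rfl⟩
    rw [Metric.mem_closedBall, dist_zero_right, norm_smul, norm_smul, norm_inv, norm_norm,
      Real.norm_eq_abs, abs_of_nonneg hz0, inv_mul_cancel₀ hxn.ne', mul_one]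
  have hfv1 : f v1 = hi + z * ‖x‖ := by
    have h2 : ‖x‖⁻¹ * ‖x‖ ^ 2 = ‖x‖ := by rw [sq, inv_mul_cancel_left₀ hxn.ne']
    have h3 : f v1 = f v0 + z * ‖x‖ := by
      simp only [hv1_def, hf_def, inner_add_left, real_inner_smul_left,
        real_inner_self_eq_norm_sq]
      rw [h2]
    rw [h3, ← hhi]
  set T := mink K z with hT_def
  have hTeq : T = K + bl := rfl
  have hTcomp : IsCompact T := hKcomp.add (isCompact_closedBall 0 z)
  have hTconv : Convex ℝ T := hKconv.add (convex_closedBall 0 z)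
  set A := mink {v ∈ K | ⟪v, x⟫ ≤ p} z with hA_def
  have hAeq : A = {v ∈ K | f v ≤ p} + bl := rfl
  have hKsec_comp : IsCompact {v ∈ K | f v ≤ p} := by
    have : {v ∈ K | f v ≤ p} = K ∩ {v | f v ≤ p} := rfl
    rw [this]
    exact hKcomp.inter_right (isClosed_le hfc continuous_const)
  have hAcomp : IsCompact A := hKsec_comp.add (isCompact_closedBall 0 z)
  have hAsubT : A ⊆ T := add_subset_add_right (sep_subset _ _)
  set C := (fun u => (5/6 : ℝ) • v1 + (1/6 : ℝ) • u) '' T with hC_def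
  have hCsubT : C ⊆ T := by
    rintro c ⟨u, hu, rfl⟩
    exact hTconv (hTeq ▸ hv1mem) hu (by norm_num : (0:ℝ) ≤ 5/6) (by norm_num : (0:ℝ) ≤ 1/6)
      (by norm_num)
  have hCcomp : IsCompact C := hTcomp.image (continuous_const.add (continuous_id.const_smul (1/6:ℝ)))
  have hCvadd : C = ((5/6 : ℝ) • v1) +ᵥ ((1/6 : ℝ) • T) := by
    ext c
    constructor
    · rintro ⟨u, hu, rfl⟩
      exact ⟨(1/6 : ℝ) • u, ⟨u, hu, rfl⟩, rfl⟩
    · rintro ⟨w, ⟨u, hu, rfl⟩, rfl⟩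
      exact ⟨u, hu, rfl⟩
  have hCvol : volume C = ENNReal.ofReal ((6:ℝ) ^ (-(d:ℤ))) * volume T := by
    rw [hCvadd, measure_vadd, Measure.addHaar_smul_of_nonneg volume (by norm_num : (0:ℝ) ≤ 1/6),
      finrank_euclideanSpace_fin]
    congr 2
    rw [zpow_neg, zpow_natCast, one_div, inv_pow]
  -- level bounds
  have hA_le : ∀ a ∈ A, f a ≤ p + z * ‖x‖ := by
    rintro a ⟨b, hb, u, hu, rfl⟩
    have hub : ‖u‖ ≤ z := by rwa [Metric.mem_closedBall, dist_zero_right] at hu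
    have h1 : ⟪u, x⟫ ≤ z * ‖x‖ := by
      calc ⟪u, x⟫ ≤ ‖u‖ * ‖x‖ := real_inner_le_norm u x
      _ ≤ z * ‖x‖ := by gcongr
    have hbp : f b ≤ p := hb.2
    show f (b + u) ≤ p + z * ‖x‖
    simp only [hf_def, inner_add_left]
    exact add_le_add hbp h1
  have hC_ge : ∀ c ∈ C, p + z * ‖x‖ ≤ f c := by
    rintro c ⟨u, hu, rfl⟩
    obtain ⟨k, hk, b, hb, rfl⟩ := hu
    have hub : ‖b‖ ≤ z := by rwa [Metric.mem_closedBall, dist_zero_right] at hb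
    have h1 : -(z * ‖x‖) ≤ ⟪b, x⟫ := by
      have h2 : |⟪b, x⟫| ≤ ‖b‖ * ‖x‖ := abs_real_inner_le_norm b x
      have h3 : ‖b‖ * ‖x‖ ≤ z * ‖x‖ := by gcongr
      have := (abs_le.1 (h2.trans h3)).1
      linarith
    have hk_lo : lo ≤ f k := hlo_le k hk
    have hzx : z * ‖x‖ ≤ z := by
      calc z * ‖x‖ ≤ z * 1 := by gcongr
      _ = z := mul_one z
    have hzx0 : 0 ≤ z * ‖x‖ := mul_nonneg hz0 hxn.le
    show p + z * ‖x‖ ≤ f ((5/6 : ℝ) • v1 + (1/6 : ℝ) • (k + b))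
    have hexp : f ((5/6 : ℝ) • v1 + (1/6 : ℝ) • (k + b))
        = (5/6) * f v1 + (1/6) * (f k + ⟪b, x⟫) := by
      simp only [hf_def, inner_add_left, real_inner_smul_left]
    rw [hexp, hfv1]
    linarith
  -- disjointness up to null set
  have hnull : volume (A ∩ C) = 0 := by
    refine measure_mono_null ?_ (hyperplane_null_s3 d x hx0 (p + z * ‖x‖))
    rintro v ⟨hvA, hvC⟩
    exact le_antisymm (hA_le v hvA) (hC_ge v hvC)
  have hCmeas : MeasurableSet C := hCcomp.measurableSet
  -- combine
  have hkey : volume A + volume C ≤ volume T := by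
    have h1 := measure_union_add_inter (μ := volume) A hCmeas
    have h2 : volume (A ∪ C) ≤ volume T := measure_mono (union_subset hAsubT hCsubT)
    rw [hnull, add_zero] at h1
    rw [← h1]
    exact h2
  have hT_ne : volume T ≠ ⊤ := hTcomp.measure_lt_top.ne
  have h6pos : (0:ℝ) < (6:ℝ) ^ (-(d:ℤ)) := zpow_pos (by norm_num) _
  have hfin : ENNReal.ofReal ((6:ℝ) ^ (-(d:ℤ))) * volume T ≠ ⊤ :=
    ENNReal.mul_ne_top ENNReal.ofReal_ne_top hT_ne
  rw [ENNReal.ofReal_sub _ h6pos.le, ENNReal.ofReal_one,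
    ENNReal.sub_mul (fun _ _ => hT_ne), one_mul]
  refine ENNReal.le_sub_of_add_le_right hfin ?_
  rw [← hCvol]
  exact hkey

/-- Mirror version of `core_cut`. -/
lemma core_cut_upper (d : ℕ) (K : Set (EuclideanSpace ℝ (Fin d)))
    (hKne : K.Nonempty) (hKcomp : IsCompact K) (hKconv : Convex ℝ K)
    (x : EuclideanSpace ℝ (Fin d)) (hx : ‖x‖ ≤ 1) (hx0 : x ≠ 0) (p : ℝ)
    (hp : sSup ((fun v => ⟪v, x⟫) '' K)
        - (3/4) * (sSup ((fun v => ⟪v, x⟫) '' K) - sInf ((fun v => ⟪v, x⟫) '' K)) ≤ p)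
    (z : ℝ) (hz0 : 0 ≤ z)
    (hzw : z ≤ (sSup ((fun v => ⟪v, x⟫) '' K) - sInf ((fun v => ⟪v, x⟫) '' K)) / 4) :
    volume (mink {v ∈ K | p ≤ ⟪v, x⟫} z)
      ≤ ENNReal.ofReal (1 - (6:ℝ) ^ (-(d:ℤ))) * volume (mink K z) := by
  set f : EuclideanSpace ℝ (Fin d) → ℝ := fun v => ⟪v, x⟫ with hf_def
  have hfc : Continuous f := continuous_id.inner continuous_const
  obtain ⟨v0, hv0K, hv0max⟩ := hKcomp.exists_isMaxOn hKne hfc.continuousOn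
  obtain ⟨vm, hvmK, hvmmin⟩ := hKcomp.exists_isMinOn hKne hfc.continuousOn
  have hhi : sSup (f '' K) = f v0 :=
    IsGreatest.csSup_eq ⟨mem_image_of_mem f hv0K, by rintro y ⟨v, hv, rfl⟩; exact hv0max hv⟩
  have hlo : sInf (f '' K) = f vm :=
    IsLeast.csInf_eq ⟨mem_image_of_mem f hvmK, by rintro y ⟨v, hv, rfl⟩; exact hvmmin hv⟩
  set g : EuclideanSpace ℝ (Fin d) → ℝ := fun v => ⟪v, -x⟫ with hg_def
  have hgf : ∀ v, g v = - f v := fun v => by simp [hg_def, hf_def, inner_neg_right]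
  have hgim : sInf (g '' K) = - f v0 := by
    refine IsLeast.csInf_eq ⟨⟨v0, hv0K, hgf v0⟩, ?_⟩
    rintro y ⟨v, hv, rfl⟩
    rw [hgf]
    exact neg_le_neg (hv0max hv)
  have hgsup : sSup (g '' K) = - f vm := by
    refine IsGreatest.csSup_eq ⟨⟨vm, hvmK, hgf vm⟩, ?_⟩
    rintro y ⟨v, hv, rfl⟩
    rw [hgf]
    exact neg_le_neg (hvmmin hv)
  have hsets : {v ∈ K | g v ≤ -p} = {v ∈ K | p ≤ ⟪v, x⟫} := by
    ext v
    simp only [mem_setOf_eq, hgf]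
    constructor
    · rintro ⟨hv, h⟩; exact ⟨hv, by linarith⟩
    · rintro ⟨hv, h⟩; exact ⟨hv, by linarith⟩
  have h := core_cut d K hKne hKcomp hKconv (-x) (by rwa [norm_neg]) (neg_ne_zero.2 hx0) (-p)
    (by
      show -p ≤ sInf (g '' K) + (3/4) * (sSup (g '' K) - sInf (g '' K))
      rw [hgim, hgsup]
      rw [hhi, hlo] at hp
      linarith)
    z hz0
    (by
      show z ≤ (sSup (g '' K) - sInf (g '' K)) / 4
      rw [hgim, hgsup]
      rw [hhi, hlo] at hzw
      linarith)
  have hsets' : {v ∈ K | ⟪v, -x⟫ ≤ -p} = {v ∈ K | p ≤ ⟪v, x⟫} := hsets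
  rwa [hsets'] at h

/-- Strong overlap case: any accepted price shrinks at least one of the two Steiner
potentials by a factor `1 - 6^{-d}`. -/
theorem strong_overlap_potential_decrease
    (d : ℕ) (hd : 1 ≤ d)
    (S B : Set (EuclideanSpace ℝ (Fin d)))
    (hSne : S.Nonempty) (hScomp : IsCompact S) (hSconv : Convex ℝ S)
    (hBne : B.Nonempty) (hBcomp : IsCompact B) (hBconv : Convex ℝ B)
    (x : EuclideanSpace ℝ (Fin d)) (hx : ‖x‖ ≤ 1)
    (sLo sHi bLo bHi : ℝ)
    (hsLo : sLo = sInf ((fun v => ⟪v, x⟫) '' S)) (hsHi : sHi = sSup ((fun v => ⟪v, x⟫) '' S))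
    (hbLo : bLo = sInf ((fun v => ⟪v, x⟫) '' B)) (hbHi : bHi = sSup ((fun v => ⟪v, x⟫) '' B))
    (hOverlap : bLo < sHi)
    (hNotWeakS : ¬ (width B x ≤ width S x ∧ (sLo + sHi) / 2 ≤ bLo))
    (hNotWeakB : ¬ (width S x ≤ width B x ∧ sHi ≤ (bLo + bHi) / 2))
    (p : ℝ) (hpl : sLo ≤ p) (hpu : p ≤ bHi) :
    (∀ z : ℝ, 0 ≤ z → z ≤ width S x / 4 →
        volume (mink {v ∈ S | ⟪v, x⟫ ≤ p} z)
          ≤ ENNReal.ofReal (1 - (6:ℝ) ^ (-(d:ℤ))) * volume (mink S z)) ∨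
    (∀ z : ℝ, 0 ≤ z → z ≤ width B x / 4 →
        volume (mink {v ∈ B | p ≤ ⟪v, x⟫} z)
          ≤ ENNReal.ofReal (1 - (6:ℝ) ^ (-(d:ℤ))) * volume (mink B z)) := by
  have hx0 : x ≠ 0 := by
    rintro rfl
    rw [hbLo, hsHi] at hOverlap
    have h1 : (fun v : EuclideanSpace ℝ (Fin d) => ⟪v, (0 : EuclideanSpace ℝ (Fin d))⟫) '' S
        = {(0:ℝ)} := by
      rw [show (fun v : EuclideanSpace ℝ (Fin d) => ⟪v, (0 : EuclideanSpace ℝ (Fin d))⟫)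
          = fun _ => (0:ℝ) from funext fun v => inner_zero_right v]
      exact hSne.image_const 0
    have h2 : (fun v : EuclideanSpace ℝ (Fin d) => ⟪v, (0 : EuclideanSpace ℝ (Fin d))⟫) '' B
        = {(0:ℝ)} := by
      rw [show (fun v : EuclideanSpace ℝ (Fin d) => ⟪v, (0 : EuclideanSpace ℝ (Fin d))⟫)
          = fun _ => (0:ℝ) from funext fun v => inner_zero_right v]
      exact hBne.image_const 0
    rw [h1, h2, csInf_singleton, csSup_singleton] at hOverlap
    exact lt_irrefl _ hOverlap
  have hwS : width S x = sHi - sLo := by rw [width, hsLo, hsHi]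
  have hwB : width B x = bHi - bLo := by rw [width, hbLo, hbHi]
  by_cases hcase : p ≤ sLo + (3/4) * (sHi - sLo)
  · left
    intro z hz0 hzw
    apply core_cut d S hSne hScomp hSconv x hx hx0 p
    · rw [← hsLo, ← hsHi]; exact hcase
    · exact hz0
    · rw [hwS] at hzw; rw [← hsLo, ← hsHi]; exact hzw
  · right
    push_neg at hcase
    have hkey : bHi - (3/4) * (bHi - bLo) ≤ p := by
      by_contra hq
      push_neg at hq
      rcases le_total (width B x) (width S x) with hw | hw
      · have h1 : ¬ ((sLo + sHi) / 2 ≤ bLo) := fun hh => hNotWeakS ⟨hw, hh⟩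
        push_neg at h1
        rw [hwS, hwB] at hw
        linarith
      · have h1 : ¬ (sHi ≤ (bLo + bHi) / 2) := fun hh => hNotWeakB ⟨hw, hh⟩
        push_neg at h1
        rw [hwS, hwB] at hw
        linarith
    intro z hz0 hzw
    apply core_cut_upper d B hBne hBcomp hBconv x hx hx0 p
    · rw [← hbLo, ← hbHi]; linarith
    · exact hz0
    · rw [hwB] at hzw; rw [← hbLo, ← hbHi]; exact hzw

end
end

section
/- Let d ≥ 1 be an integer, let S ⊆ ℝ^d be a nonempty compact convex set, let x ∈ ℝ^d with ‖x‖ ≤ 1, let i ∈ ℕ, and set z = 2^{-3·2^i}/(16d). Let m ∈ ℝ satisfy vol({v ∈ S + z𝔹 : ⟪v,x⟫ ≥ m}) = 2^{-2^{i-1}} · vol(S + z𝔹) (with 2^{-2^{i-1}} a real power, e.g. 2^{-1/2} when i = 0). Then the set obtained after the seller refuses the price m + z satisfies vol({v ∈ S : ⟪v,x⟫ ≥ m + z} + z𝔹) ≤ 2^{-2^{i-1}} · vol(S + z𝔹). -/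
open MeasureTheory Set
open scoped RealInnerProductSpace Pointwise ENNReal

noncomputable section

/-- Refusing an unbalanced price shrinks the Steiner potential by a factor
`2^{-2^{i-1}}`. -/
theorem refuse_unbalanced_price_potential_decrease
    (d : ℕ) (hd : 1 ≤ d)
    (S : Set (EuclideanSpace ℝ (Fin d))) (hSne : S.Nonempty) (hScomp : IsCompact S)
    (hSconv : Convex ℝ S)
    (x : EuclideanSpace ℝ (Fin d)) (hx : ‖x‖ ≤ 1)
    (i : ℕ) (z : ℝ) (hzdef : z = (2:ℝ) ^ (-(3 * 2 ^ i : ℤ)) / (16 * d))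
    (m : ℝ)
    (hm : volume {v ∈ mink S z | m ≤ ⟪v, x⟫}
        = ENNReal.ofReal ((2:ℝ) ^ (-((2:ℝ) ^ ((i:ℝ) - 1)))) * volume (mink S z)) :
    volume (mink {v ∈ S | m + z ≤ ⟪v, x⟫} z)
      ≤ ENNReal.ofReal ((2:ℝ) ^ (-((2:ℝ) ^ ((i:ℝ) - 1)))) * volume (mink S z) := by
  have hz : 0 ≤ z := by
    rw [hzdef]
    positivity
  rw [← hm]
  apply measure_mono
  rintro v ⟨s, ⟨hsS, hsm⟩, w, hw, rfl⟩
  refine ⟨⟨s, hsS, w, hw, rfl⟩, ?_⟩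
  simp only [Metric.mem_closedBall, dist_zero_right] at hw
  have h1 : |⟪w, x⟫| ≤ z := by
    calc |⟪w, x⟫| ≤ ‖w‖ * ‖x‖ := abs_real_inner_le_norm w x
    _ ≤ z * 1 := by apply mul_le_mul hw hx (norm_nonneg x) hz
    _ = z := mul_one z
  have := abs_le.mp h1
  have : ⟪s + w, x⟫ = ⟪s, x⟫ + ⟪w, x⟫ := inner_add_left s w x
  rw [this]
  linarith [(abs_le.mp h1).1]

end
end

section
/- Let d ≥ 1 be an integer, let S ⊆ ℝ^d be a nonempty compact convex set, let x ∈ ℝ^d with ‖x‖ ≤ 1, let i ∈ ℕ, and set z = 2^{-3·2^i}/(16d). Assume width(S,x) ≥ 2^{-2^{i+1}}. Let m ∈ ℝ satisfy vol({v ∈ S + z𝔹 : ⟪v,x⟫ ≥ m}) = 2^{-2^{i-1}} · vol(S + z𝔹) (real powers of 2). Then the set obtained after the seller accepts the price m + z satisfies vol({v ∈ S : ⟪v,x⟫ ≤ m + z} + z𝔹) ≤ (1 − 1/(10·2^{2^{i-1}})) · vol(S + z𝔹). -/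
open MeasureTheory Set
open scoped RealInnerProductSpace Pointwise ENNReal

noncomputable section

lemma slab_vol {d : ℕ} (hd : 1 ≤ d) (T : Set (EuclideanSpace ℝ (Fin d)))
    (hconv : Convex ℝ T) (hmeas : MeasurableSet T)
    (φ : EuclideanSpace ℝ (Fin d) →L[ℝ] ℝ)
    (q : EuclideanSpace ℝ (Fin d)) (hq : q ∈ T) (c δ : ℝ) (hδ : 0 < δ) (hcq : φ q < c) :
    volume (T ∩ {v | c < φ v ∧ φ v < c + δ})
      ≤ ENNReal.ofReal (1 - ((c - φ q)/(c + δ - φ q)) ^ d) * volume T := by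
  set a0 := φ q with ha0
  set r : ℝ := (c - a0)/(c + δ - a0) with hrdef
  have hden : 0 < c + δ - a0 := by linarith
  have hr0 : 0 < r := div_pos (by linarith) hden
  have hr1 : r < 1 := (div_lt_one hden).2 (by linarith)
  have hrmul : r * (c + δ - a0) = c - a0 := div_mul_cancel₀ _ (ne_of_gt hden)
  set Sl : Set (EuclideanSpace ℝ (Fin d)) := T ∩ {v | c < φ v ∧ φ v < c + δ} with hSl
  have hSlmeas : MeasurableSet Sl := by
    apply hmeas.inter
    have : {v : EuclideanSpace ℝ (Fin d) | c < φ v ∧ φ v < c + δ} = φ ⁻¹' (Ioo c (c + δ)) := rfl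
    rw [this]
    exact measurableSet_Ioo.preimage φ.continuous.measurable
  set A : ℕ → Set (EuclideanSpace ℝ (Fin d)) := fun k => AffineMap.homothety q (r ^ k) '' Sl with hA
  -- volume of each copy
  have hvol : ∀ k, volume (A k) = ENNReal.ofReal (r ^ d) ^ k * volume Sl := by
    intro k
    rw [hA]
    simp only
    rw [MeasureTheory.Measure.addHaar_image_homothety]
    congr 1
    rw [finrank_euclideanSpace_fin, abs_of_nonneg (by positivity), ← pow_mul, mul_comm k d,
      pow_mul, ENNReal.ofReal_pow (by positivity)]
  -- membership level bounds
  have hlev : ∀ k u, u ∈ A k → a0 + r ^ k * (c - a0) < φ u ∧ φ u < a0 + r ^ k * (c + δ - a0) := by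
    rintro k u ⟨v, hv, rfl⟩
    have h1 : c < φ v := hv.2.1
    have h2 : φ v < c + δ := hv.2.2
    have : φ (AffineMap.homothety q (r ^ k) v) = a0 + r ^ k * (φ v - a0) := by
      simp [AffineMap.homothety_apply, vsub_eq_sub, vadd_eq_add, map_add, ContinuousLinearMap.map_smul, map_sub, smul_eq_mul]
      ring
    rw [this]
    have hrk : (0:ℝ) < r ^ k := pow_pos hr0 k
    constructor <;> nlinarith
  -- copies inside T
  have hsub : ∀ k, A k ⊆ T := by
    rintro k u ⟨v, hv, rfl⟩
    have hrk0 : (0:ℝ) ≤ r ^ k := le_of_lt (pow_pos hr0 k)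
    have hrk1 : r ^ k ≤ 1 := pow_le_one₀ (le_of_lt hr0) (le_of_lt hr1)
    have : AffineMap.homothety q (r ^ k) v = (1 - r ^ k) • q + r ^ k • v := by
      simp [AffineMap.homothety_apply, vsub_eq_sub, vadd_eq_add, sub_smul, smul_sub]
      module
    rw [this]
    exact hconv hq hv.1 (by linarith) hrk0 (by ring)
  -- disjointness
  have hkey : ∀ j k, j < k → Disjoint (A j) (A k) := by
    intro j k hjk
    rw [Set.disjoint_left]
    intro u huj huk
    have h1 := (hlev j u huj).1
    have h2 := (hlev k u huk).2
    have hk1 : r ^ k * (c + δ - a0) = r ^ (k-1) * (c - a0) := by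
      have : k = (k-1) + 1 := (Nat.succ_pred_eq_of_pos (by omega)).symm
      rw [this, pow_succ, mul_assoc, hrmul]
      simp [Nat.succ_sub_one]
    have hle : r ^ (k-1) ≤ r ^ j :=
      pow_le_pow_of_le_one (le_of_lt hr0) (le_of_lt hr1) (by omega)
    have hca : (0:ℝ) < c - a0 := by linarith
    nlinarith
  have hdisj : Pairwise (Function.onFun Disjoint A) := by
    intro j k hjk
    rcases lt_or_gt_of_ne hjk with h | h
    · exact hkey j k h
    · exact (hkey k j h).symm
  -- measurability of copies
  have hAmeas : ∀ k, MeasurableSet (A k) := by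
    intro k
    have hrk : (r:ℝ) ^ k ≠ 0 := ne_of_gt (pow_pos hr0 k)
    have : A k = (fun u => (r ^ k)⁻¹ • (u - q) + q) ⁻¹' Sl := by
      ext u
      constructor
      · rintro ⟨v, hv, rfl⟩
        have : (r ^ k)⁻¹ • (AffineMap.homothety q (r ^ k) v - q) + q = v := by
          simp [AffineMap.homothety_apply, vsub_eq_sub, vadd_eq_add, smul_smul,
            inv_mul_cancel₀ hrk]
        simpa [Set.mem_preimage, this] using hv
      · intro hu
        refine ⟨(r ^ k)⁻¹ • (u - q) + q, hu, ?_⟩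
        simp [AffineMap.homothety_apply, vsub_eq_sub, vadd_eq_add, smul_smul,
          mul_inv_cancel₀ hrk]
    rw [this]
    have hcont : Continuous fun u : EuclideanSpace ℝ (Fin d) => (r ^ k)⁻¹ • (u - q) + q := by
      fun_prop
    exact hSlmeas.preimage hcont.measurable
  -- sum up
  have hsum : ∑' k, volume (A k) = volume (⋃ k, A k) := (measure_iUnion hdisj hAmeas).symm
  have hUle : volume (⋃ k, A k) ≤ volume T := measure_mono (Set.iUnion_subset hsub)
  set ρ : ℝ≥0∞ := ENNReal.ofReal (r ^ d) with hρ
  have hρ1 : ρ < 1 := ENNReal.ofReal_lt_one.2 (pow_lt_one₀ (le_of_lt hr0) hr1 (by omega))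
  have htsum : ∑' k, volume (A k) = (1 - ρ)⁻¹ * volume Sl := by
    simp_rw [hvol]
    rw [ENNReal.tsum_mul_right, ENNReal.tsum_geometric]
  have hmain : (1 - ρ)⁻¹ * volume Sl ≤ volume T := by
    rw [← htsum, hsum]; exact hUle
  have h1ρ : (1 - ρ) ≠ 0 := by
    simp only [ne_eq, tsub_eq_zero_iff_le, not_le]
    exact hρ1
  have h1ρ' : (1 - ρ) ≠ ⊤ := by
    exact ne_top_of_le_ne_top ENNReal.one_ne_top tsub_le_self
  have : volume Sl ≤ (1 - ρ) * volume T := by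
    calc volume Sl = (1 - ρ) * ((1 - ρ)⁻¹ * volume Sl) := by
          rw [← mul_assoc, ENNReal.mul_inv_cancel h1ρ h1ρ', one_mul]
      _ ≤ (1 - ρ) * volume T := mul_le_mul_right hmain _
  have h2 : ENNReal.ofReal (1 - r ^ d) = 1 - ρ := by
    rw [hρ, ENNReal.ofReal_sub _ (by positivity), ENNReal.ofReal_one]
  rw [h2]; exact this

lemma bern_helper (d : ℕ) (c δ a0 W : ℝ) (hδ : 0 < δ) (hW : 0 < W) (hca : W/4 ≤ c - a0) :
    1 - ((c - a0)/(c + δ - a0))^d ≤ (d:ℝ) * δ * 4 / W := by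
  have hden : 0 < c + δ - a0 := by linarith
  set r : ℝ := (c - a0)/(c + δ - a0) with hr
  have hr0 : 0 < r := div_pos (by linarith) hden
  have hr1 : r < 1 := (div_lt_one hden).2 (by linarith)
  have hb := one_add_mul_le_pow (a := r - 1) (by linarith) d
  rw [add_sub_cancel] at hb
  have h1 : 1 - r ^ d ≤ (d:ℝ) * (1 - r) := by nlinarith
  have h2 : 1 - r = δ / (c + δ - a0) := by
    rw [hr]; field_simp; ring
  have h3 : δ / (c + δ - a0) ≤ 4 * δ / W := by
    rw [div_le_div_iff₀ hden hW]
    nlinarith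
  have hd0 : (0:ℝ) ≤ (d:ℝ) := Nat.cast_nonneg d
  calc 1 - r ^ d ≤ (d:ℝ) * (1 - r) := h1
    _ = (d:ℝ) * (δ / (c + δ - a0)) := by rw [h2]
    _ ≤ (d:ℝ) * (4 * δ / W) := by
        apply mul_le_mul_of_nonneg_left h3 hd0
    _ = (d:ℝ) * δ * 4 / W := by ring

lemma num_facts (i : ℕ) (d : ℕ) (hd : 1 ≤ d) (z : ℝ)
    (hzdef : z = (2:ℝ) ^ (-(3 * 2 ^ i : ℤ)) / (16 * d)) :
    16 * (d:ℝ) * z = (2:ℝ) ^ (-(3 * (2:ℝ) ^ (i:ℝ))) ∧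
    (2:ℝ) ^ (-(2 ^ (i + 1) : ℤ)) = (2:ℝ) ^ (-(2 * (2:ℝ) ^ (i:ℝ))) := by
  have hd0 : (0:ℝ) < d := by exact_mod_cast hd
  constructor
  · rw [hzdef]
    have h1 : 16 * (d:ℝ) * ((2:ℝ) ^ (-(3 * 2 ^ i : ℤ)) / (16 * d)) = (2:ℝ) ^ (-(3 * 2 ^ i : ℤ)) := by
      field_simp
    rw [h1, ← Real.rpow_intCast 2 (-(3 * 2 ^ i : ℤ))]
    congr 1
    push_cast
    rw [← Real.rpow_natCast 2 i]
  · rw [← Real.rpow_intCast 2 (-(2 ^ (i+1) : ℤ))]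
    congr 1
    push_cast [pow_succ]
    rw [← Real.rpow_natCast 2 i]
    ring

lemma eps_facts (i : ℕ) :
    (2:ℝ) ^ ((i:ℝ) - 1) = (2:ℝ) ^ (i:ℝ) / 2 ∧
    (2:ℝ) ^ (-((2:ℝ)^(i:ℝ))) = (2:ℝ) ^ (-((2:ℝ) ^ ((i:ℝ) - 1))) * (2:ℝ) ^ (-((2:ℝ) ^ ((i:ℝ) - 1))) ∧
    (2:ℝ) ^ (-((2:ℝ) ^ ((i:ℝ) - 1))) ≤ 3/4 := by
  have h2 : (0:ℝ) < 2 := two_pos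
  have hexp : (2:ℝ) ^ ((i:ℝ) - 1) = (2:ℝ) ^ (i:ℝ) / 2 := by
    rw [Real.rpow_sub h2, Real.rpow_one]
  have hei1 : (1:ℝ) ≤ (2:ℝ) ^ (i:ℝ) := by
    have := Real.rpow_le_rpow_of_exponent_le one_le_two (Nat.cast_nonneg i : (0:ℝ) ≤ i)
    simpa using this
  refine ⟨hexp, ?_, ?_⟩
  · rw [← Real.rpow_add h2]
    congr 1
    rw [hexp]; ring
  · have hmono : (2:ℝ) ^ (-((2:ℝ) ^ ((i:ℝ) - 1))) ≤ (2:ℝ) ^ (-(1/2):ℝ) := by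
      apply Real.rpow_le_rpow_of_exponent_le one_le_two
      rw [hexp]; linarith
    have hs : (2:ℝ) ^ (-(1/2):ℝ) * (2:ℝ) ^ (-(1/2):ℝ) = 1/2 := by
      rw [← Real.rpow_add h2]
      norm_num
    have hspos : (0:ℝ) < (2:ℝ) ^ (-(1/2):ℝ) := Real.rpow_pos_of_pos h2 _
    nlinarith

/-- Accepting an unbalanced price shrinks the Steiner potential by a factor
`1 - 1/(10·2^{2^{i-1}})`. -/
theorem accept_unbalanced_price_potential_decrease
    (d : ℕ) (hd : 1 ≤ d)
    (S : Set (EuclideanSpace ℝ (Fin d))) (hSne : S.Nonempty) (hScomp : IsCompact S)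
    (hSconv : Convex ℝ S)
    (x : EuclideanSpace ℝ (Fin d)) (hx : ‖x‖ ≤ 1)
    (i : ℕ) (z : ℝ) (hzdef : z = (2:ℝ) ^ (-(3 * 2 ^ i : ℤ)) / (16 * d))
    (hw : (2:ℝ) ^ (-(2 ^ (i + 1) : ℤ)) ≤ width S x)
    (m : ℝ)
    (hm : volume {v ∈ mink S z | m ≤ ⟪v, x⟫}
        = ENNReal.ofReal ((2:ℝ) ^ (-((2:ℝ) ^ ((i:ℝ) - 1)))) * volume (mink S z)) :
    volume (mink {v ∈ S | ⟪v, x⟫ ≤ m + z} z)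
      ≤ ENNReal.ofReal (1 - 1 / (10 * (2:ℝ) ^ ((2:ℝ) ^ ((i:ℝ) - 1))))
          * volume (mink S z) := by
  classical
  -- numeric abbreviations (plain `have`s)
  obtain ⟨h16dz, hw2⟩ := num_facts i d hd z hzdef
  obtain ⟨hexp, hetaeq, heps34⟩ := eps_facts i
  set ei : ℝ := (2:ℝ) ^ (i:ℝ) with heidef
  set ε : ℝ := (2:ℝ) ^ (-((2:ℝ) ^ ((i:ℝ) - 1))) with hεdef
  set η : ℝ := (2:ℝ) ^ (-ei) with hηdef
  set w : ℝ := (2:ℝ) ^ (-(2*ei)) with hwdef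
  have hεpos : 0 < ε := Real.rpow_pos_of_pos two_pos _
  have hηpos : 0 < η := Real.rpow_pos_of_pos two_pos _
  have hwpos : 0 < w := Real.rpow_pos_of_pos two_pos _
  have hd0 : (0:ℝ) < d := by exact_mod_cast hd
  have hzpos : 0 < z := by
    rw [hzdef]; positivity
  have h3le2 : (2:ℝ) ^ (-(3*ei)) ≤ w := by
    rw [hwdef]
    apply Real.rpow_le_rpow_of_exponent_le one_le_two
    have hei1 : (1:ℝ) ≤ ei := by
      rw [heidef]
      simpa using Real.rpow_le_rpow_of_exponent_le one_le_two (Nat.cast_nonneg i : (0:ℝ) ≤ i)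
    linarith
  have hηw : (d:ℝ) * (4*z) * 4 / w = η := by
    have : (d:ℝ) * (4*z) * 4 = 16 * d * z := by ring
    rw [this, h16dz, hηdef, hwdef, ← Real.rpow_sub two_pos]
    congr 1; ring
  have hd1 : (1:ℝ) ≤ d := by exact_mod_cast hd
  have h4z : 4 * z ≤ w / 4 := by
    have h1 : 16 * (d:ℝ) * z ≤ w := h16dz ▸ h3le2
    nlinarith
  -- geometry setup
  set T : Set (EuclideanSpace ℝ (Fin d)) := mink S z with hT
  have hzB : (0:EuclideanSpace ℝ (Fin d)) ∈ Metric.closedBall (0:EuclideanSpace ℝ (Fin d)) z := by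
    simp [hzpos.le]
  have hST : S ⊆ T := fun v hv => ⟨v, hv, 0, hzB, add_zero v⟩
  have hTcomp : IsCompact T := hScomp.add (isCompact_closedBall _ _)
  have hTconv : Convex ℝ T := hSconv.add (convex_closedBall _ _)
  have hTmeas : MeasurableSet T := hTcomp.isClosed.measurableSet
  have hVfin : volume T ≠ ⊤ := hTcomp.measure_lt_top.ne
  set φ : EuclideanSpace ℝ (Fin d) →L[ℝ] ℝ := innerSL ℝ x with hφ
  have hφx : ∀ v : EuclideanSpace ℝ (Fin d), ⟪v, x⟫ = φ v := by
    intro v; rw [hφ, innerSL_apply_apply]; exact real_inner_comm x v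
  -- extreme points
  obtain ⟨p, hpS, hp⟩ := hScomp.exists_isMaxOn hSne φ.continuous.continuousOn
  obtain ⟨q, hqS, hq⟩ := hScomp.exists_isMinOn hSne φ.continuous.continuousOn
  have hwidth : width S x ≤ φ p - φ q := by
    have himg : (fun v : EuclideanSpace ℝ (Fin d) => ⟪v, x⟫) '' S = (fun v => φ v) '' S :=
      Set.image_congr fun v _ => hφx v
    rw [width, himg]
    have h1 : sSup ((fun v => φ v) '' S) ≤ φ p := by
      apply csSup_le (hSne.image _)
      rintro _ ⟨v, hv, rfl⟩; exact hp hv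
    have h2 : φ q ≤ sInf ((fun v => φ v) '' S) := by
      apply le_csInf (hSne.image _)
      rintro _ ⟨v, hv, rfl⟩; exact hq hv
    linarith
  have hgap : w ≤ φ p - φ q := le_trans (le_of_eq hw2.symm) (le_trans hw hwidth)
  -- the slab and the high cap
  set Sl : Set (EuclideanSpace ℝ (Fin d)) := T ∩ {v | m - z < φ v ∧ φ v < (m - z) + 4*z}
    with hSldef
  set cap3 : Set (EuclideanSpace ℝ (Fin d)) := T ∩ {v | m + 3*z ≤ φ v} with hcap3def
  have hcap3meas : MeasurableSet cap3 :=
    hTmeas.inter (measurableSet_le measurable_const φ.continuous.measurable)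
  -- slab volume bound
  have hSl : volume Sl ≤ ENNReal.ofReal η * volume T := by
    by_cases hcase : w/4 ≤ φ p - (m + 3*z)
    · -- use the top point with -φ
      have happ := slab_vol hd T hTconv hTmeas (-φ) p (hST hpS) (-(m + 3*z)) (4*z)
        (by linarith) (by simp; linarith)
      have hset : T ∩ {v | -(m + 3*z) < (-φ) v ∧ (-φ) v < -(m + 3*z) + 4*z} = Sl := by
        ext v
        simp only [hSldef, Set.mem_inter_iff, Set.mem_setOf_eq, ContinuousLinearMap.neg_apply]
        constructor
        · rintro ⟨h1, h2, h3⟩; exact ⟨h1, by linarith, by linarith⟩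
        · rintro ⟨h1, h2, h3⟩; exact ⟨h1, by linarith, by linarith⟩
      rw [hset] at happ
      refine happ.trans ?_
      apply mul_le_mul_left
      apply ENNReal.ofReal_le_ofReal
      have hb := bern_helper d (-(m + 3*z)) (4*z) ((-φ) p) w (by linarith) hwpos
        (by simp; linarith)
      rw [hηw] at hb
      exact hb
    · -- use the bottom point with φ
      push_neg at hcase
      have hqlow : w/4 ≤ (m - z) - φ q := by
        have : φ p - φ q ≥ w := hgap
        linarith
      have happ := slab_vol hd T hTconv hTmeas φ q (hST hqS) (m - z) (4*z)
        (by linarith) (by linarith)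
      refine happ.trans ?_
      apply mul_le_mul_left
      apply ENNReal.ofReal_le_ofReal
      have hb := bern_helper d (m - z) (4*z) (φ q) w (by linarith) hwpos hqlow
      rw [hηw] at hb
      exact hb
  -- cap at m
  have hmrw : {v ∈ mink S z | m ≤ ⟪v, x⟫} = T ∩ {v | m ≤ φ v} := by
    ext v
    simp only [Set.mem_sep_iff, Set.mem_inter_iff, Set.mem_setOf_eq, hφx v, hT]
  have hcapm : volume (T ∩ {v | m ≤ φ v}) = ENNReal.ofReal ε * volume T := by
    rw [← hmrw]; exact hm
  have hcover : T ∩ {v | m ≤ φ v} ⊆ Sl ∪ cap3 := by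
    rintro v ⟨hv1, hv2⟩
    have hv2' : m ≤ φ v := hv2
    by_cases h : m + 3*z ≤ φ v
    · exact Or.inr ⟨hv1, h⟩
    · push_neg at h
      exact Or.inl ⟨hv1, ⟨by linarith, by linarith⟩⟩
  have h1 : ENNReal.ofReal ε * volume T ≤ ENNReal.ofReal η * volume T + volume cap3 := by
    calc ENNReal.ofReal ε * volume T = volume (T ∩ {v | m ≤ φ v}) := hcapm.symm
      _ ≤ volume (Sl ∪ cap3) := measure_mono hcover
      _ ≤ volume Sl + volume cap3 := measure_union_le _ _
      _ ≤ ENNReal.ofReal η * volume T + volume cap3 := add_le_add_left hSl _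
  have hηε : ε/10 + η ≤ ε := by
    have h' : ε * ε ≤ (3/4) * ε := mul_le_mul_of_nonneg_right heps34 hεpos.le
    rw [hetaeq]
    linarith
  have h2 : ENNReal.ofReal (ε/10) * volume T ≤ volume cap3 := by
    have ha : ENNReal.ofReal η * volume T + ENNReal.ofReal (ε/10) * volume T
        ≤ ENNReal.ofReal η * volume T + volume cap3 := by
      refine le_trans ?_ h1
      rw [← add_mul, ← ENNReal.ofReal_add (by positivity) (by positivity)]
      apply mul_le_mul_left
      apply ENNReal.ofReal_le_ofReal
      linarith
    have hfin : ENNReal.ofReal η * volume T ≠ ⊤ :=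
      ENNReal.mul_ne_top ENNReal.ofReal_ne_top hVfin
    exact (ENNReal.add_le_add_iff_left hfin).1 ha
  -- final set
  have hAsub : mink {v ∈ S | ⟪v, x⟫ ≤ m + z} z ⊆ T \ cap3 := by
    intro u hu
    obtain ⟨v, hv, ww, hww, rfl⟩ := Set.mem_add.1 hu
    obtain ⟨hvS, hvle⟩ := hv
    rw [hφx v] at hvle
    have hφw : φ ww ≤ z := by
      have h1 : φ ww ≤ ‖x‖ * ‖ww‖ := by
        rw [hφ]; simpa using real_inner_le_norm x ww
      have h2 : ‖ww‖ ≤ z := by simpa using mem_closedBall_zero_iff.1 hww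
      have : ‖x‖ * ‖ww‖ ≤ 1 * z := by
        apply mul_le_mul hx h2 (norm_nonneg _) zero_le_one
      linarith
    constructor
    · exact Set.mem_add.2 ⟨v, hvS, ww, hww, rfl⟩
    · intro hmem
      have := hmem.2
      simp only [Set.mem_setOf_eq, map_add] at this
      linarith
  have hstep : volume (mink {v ∈ S | ⟪v, x⟫ ≤ m + z} z)
      ≤ volume T - ENNReal.ofReal (ε/10) * volume T := by
    have hdiff : volume (T \ cap3) = volume T - volume cap3 :=
      measure_diff Set.inter_subset_left hcap3meas.nullMeasurableSet
        (ne_top_of_le_ne_top hVfin (measure_mono Set.inter_subset_left))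
    calc volume (mink {v ∈ S | ⟪v, x⟫ ≤ m + z} z) ≤ volume (T \ cap3) := measure_mono hAsub
      _ = volume T - volume cap3 := hdiff
      _ ≤ volume T - ENNReal.ofReal (ε/10) * volume T := tsub_le_tsub_left h2 _
  have hconst : (1 : ℝ) - 1 / (10 * (2:ℝ) ^ ((2:ℝ) ^ ((i:ℝ) - 1))) = 1 - ε/10 := by
    rw [hεdef, Real.rpow_neg (by norm_num : (0:ℝ) ≤ 2)]
    have hX : (0:ℝ) < (2:ℝ) ^ ((2:ℝ) ^ ((i:ℝ) - 1)) := Real.rpow_pos_of_pos two_pos _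
    field_simp
  have hfinal : volume T - ENNReal.ofReal (ε/10) * volume T
      = ENNReal.ofReal (1 - ε/10) * volume T := by
    rw [ENNReal.ofReal_sub _ (by positivity), ENNReal.ofReal_one,
      ENNReal.sub_mul (fun _ _ => hVfin), one_mul]
  rw [hconst]
  exact hstep.trans (le_of_eq hfinal)

end
end
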